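/- In the two-state Markov chain example (identity P, flip-ε matrix P̃, initial masses p and p - δ at state 1), suppose -p f_n(ε)/(1 - f_n(ε)) ≤ δ ≤ (1-p) f_n(ε)/(1 - f_n(ε)) where f_n(ε) = 1 - (1-ε)ⁿ. Then ‖ℙⁿ - ℙ̃ⁿ‖ = 2 f_n(ε), which does not depend on δ. -/

import Mathlib

open MeasureTheory ProbabilityTheory
open scoped ENNReal

/-- Total mass (as a real number) of a measure. -/
noncomputable def mass {X : Type*} [MeasurableSpace X] (μ : Measure X) : ℝ :=
  (μ Set.univ).toReal

/-- Total variation distance `‖ν - ν'‖` between two finite measures. -/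
noncomputable def tvDist {X : Type*} [MeasurableSpace X] (ν ν' : Measure X)
    [IsFiniteMeasure ν] [IsFiniteMeasure ν'] : ℝ :=
  (((ν.toSignedMeasure - ν'.toSignedMeasure).totalVariation) Set.univ).toReal

/-- The minimum `ν ∧ ν' := ν - (ν - ν')⁻` of two finite measures, via the
Hahn–Jordan decomposition of `ν - ν'`. -/
noncomputable def measInf {X : Type*} [MeasurableSpace X] (ν ν' : Measure X)
    [IsFiniteMeasure ν] [IsFiniteMeasure ν'] : Measure X :=
  ν - (ν.toSignedMeasure - ν'.toSignedMeasure).toJordanDecomposition.negPart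

/-- `chainLaw μ P Pr` says that `Pr n` is the law on `{0,1}^{n+1}` of the first
`n+1` states of the chain with initial distribution `μ` and one-step
history-dependent kernels `P`. -/
def chainLaw (μ : Measure (Fin 2)) (P : ∀ k : ℕ, Kernel (Fin (k + 1) → Fin 2) (Fin 2))
    (Pr : ∀ n : ℕ, Measure (Fin (n + 1) → Fin 2)) : Prop :=
  Pr 0 = μ.map (fun x => fun _ : Fin 1 => x) ∧
    ∀ n, Pr (n + 1) = ((Pr n) ⊗ₘ (P n)).map (fun q => Fin.snoc q.1 q.2)

/-- `isIdentityKernel P` : the chain moves deterministically, staying in its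
current state (identity transition matrix). -/
def isIdentityKernel (P : ∀ k : ℕ, Kernel (Fin (k + 1) → Fin 2) (Fin 2)) : Prop :=
  ∀ k ω, P k ω = Measure.dirac (ω (Fin.last k))

/-- `isFlipKernel ε P` : at each step the chain stays with probability `1 - ε`
and flips with probability `ε`. -/
def isFlipKernel (ε : ℝ) (P : ∀ k : ℕ, Kernel (Fin (k + 1) → Fin 2) (Fin 2)) : Prop :=
  ∀ k ω, P k ω = ENNReal.ofReal (1 - ε) • Measure.dirac (ω (Fin.last k)) +
    ENNReal.ofReal ε • Measure.dirac (ω (Fin.last k) + 1)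

/- ### Auxiliary lemmas -/

lemma meas_univ_eq_sum' {X : Type*} [Fintype X] [MeasurableSpace X] [MeasurableSingletonClass X]
    (m : Measure X) : m Set.univ = ∑ x, m {x} := by
  have := sum_measure_preimage_singleton (μ := m) (Finset.univ : Finset X) (f := id)
    (fun y _ => by simpa using measurableSet_singleton y)
  simpa using this.symm

lemma tvDist_eq_sum' {X : Type*} [Fintype X] [MeasurableSpace X] [MeasurableSingletonClass X]
    (ν ν' : Measure X) [IsFiniteMeasure ν] [IsFiniteMeasure ν'] :
    tvDist ν ν' = ∑ x, |(ν {x}).toReal - (ν' {x}).toReal| := by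
  rw [tvDist]
  set s := ν.toSignedMeasure - ν'.toSignedMeasure with hs_def
  have hs : ∀ x : X, s {x} = (ν {x}).toReal - (ν' {x}).toReal := by
    intro x
    rw [hs_def, VectorMeasure.sub_apply,
      Measure.toSignedMeasure_apply_measurable (measurableSet_singleton x),
      Measure.toSignedMeasure_apply_measurable (measurableSet_singleton x)]
    rfl
  set j := s.toJordanDecomposition with hj_def
  have hj : ∀ x : X, s {x} = (j.posPart {x}).toReal - (j.negPart {x}).toReal := by
    intro x
    conv_lhs => rw [← s.toSignedMeasure_toJordanDecomposition]
    rw [JordanDecomposition.toSignedMeasure, VectorMeasure.sub_apply,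
      Measure.toSignedMeasure_apply_measurable (measurableSet_singleton x),
      Measure.toSignedMeasure_apply_measurable (measurableSet_singleton x)]
    rfl
  obtain ⟨u, hu, hpu, hnu⟩ := j.mutuallySingular
  have key : ∀ x : X, (j.posPart {x}).toReal + (j.negPart {x}).toReal = |s {x}| := by
    intro x
    by_cases hx : x ∈ u
    · have h0 : j.posPart {x} = 0 :=
        measure_mono_null (Set.singleton_subset_iff.2 hx) hpu
      rw [h0, hj x, h0]
      simp [abs_of_nonpos (neg_nonpos.2 ENNReal.toReal_nonneg)]
    · have h0 : j.negPart {x} = 0 :=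
        measure_mono_null (Set.singleton_subset_iff.2 hx) hnu
      rw [h0, hj x, h0]
      simp [abs_of_nonneg (ENNReal.toReal_nonneg)]
  have : s.totalVariation Set.univ = ∑ x, (j.posPart {x} + j.negPart {x}) := by
    rw [SignedMeasure.totalVariation, Measure.add_apply, meas_univ_eq_sum', meas_univ_eq_sum',
      ← Finset.sum_add_distrib]
  rw [this, ENNReal.toReal_sum
    (by intro a _; exact ENNReal.add_ne_top.2 ⟨measure_ne_top _ _, measure_ne_top _ _⟩)]
  refine Finset.sum_congr rfl fun x _ => ?_
  rw [ENNReal.toReal_add (measure_ne_top _ _) (measure_ne_top _ _), key x, hs x]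

lemma measurable_snocMap (n : ℕ) :
    Measurable (fun q : (Fin (n+1) → Fin 2) × Fin 2 => (Fin.snoc q.1 q.2 : Fin (n+2) → Fin 2)) := by
  apply measurable_pi_lambda
  intro i
  refine Fin.lastCases ?_ ?_ i
  · simpa [Fin.snoc_last] using measurable_snd
  · intro j
    simp only [Fin.snoc_castSucc]
    exact (measurable_pi_apply j).comp measurable_fst

lemma snoc_preimage' {n : ℕ} (x : Fin (n+2) → Fin 2) :
    (fun q : (Fin (n+1) → Fin 2) × Fin 2 => (Fin.snoc q.1 q.2 : Fin (n+2) → Fin 2)) ⁻¹' {x}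
      = {(Fin.init x, x (Fin.last (n+1)))} := by
  ext ⟨a, c⟩
  simp only [Set.mem_preimage, Set.mem_singleton_iff, Prod.mk.injEq]
  constructor
  · rintro rfl
    simp [Fin.init_snoc, Fin.snoc_last]
  · rintro ⟨rfl, rfl⟩
    exact Fin.snoc_init_self x

lemma compProd_singleton' {n : ℕ} (m : Measure (Fin (n+1) → Fin 2)) [IsFiniteMeasure m]
    (κ : Kernel (Fin (n+1) → Fin 2) (Fin 2)) [IsMarkovKernel κ]
    (a : Fin (n+1) → Fin 2) (c : Fin 2) :
    (m ⊗ₘ κ) {(a, c)} = m {a} * κ a {c} := by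
  rw [Measure.compProd_apply (measurableSet_singleton _)]
  have h : ∀ b, κ b (Prod.mk b ⁻¹' {(a,c)}) = Set.indicator {a} (fun b => κ b {c}) b := by
    intro b
    have hpre : Prod.mk b ⁻¹' {(a,c)} = if b = a then ({c} : Set (Fin 2)) else ∅ := by
      ext y
      by_cases hb : b = a <;> simp [Prod.ext_iff, hb]
    by_cases hb : b = a
    · subst hb; simp [hpre]
    · simp [hpre, hb, Set.indicator_of_notMem, hb]
  simp_rw [h]
  rw [lintegral_indicator (measurableSet_singleton a), lintegral_singleton]
  ring

lemma chainLaw_zero_singleton {μ : Measure (Fin 2)}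
    {P : ∀ k : ℕ, Kernel (Fin (k + 1) → Fin 2) (Fin 2)}
    {Pr : ∀ n : ℕ, Measure (Fin (n + 1) → Fin 2)}
    (h : chainLaw μ P Pr) (x : Fin 1 → Fin 2) :
    Pr 0 {x} = μ {x 0} := by
  have hm : Measurable (fun a : Fin 2 => fun _ : Fin 1 => a) :=
    measurable_pi_lambda _ fun _ => measurable_id
  rw [h.1, Measure.map_apply hm (measurableSet_singleton x)]
  congr 1
  ext a
  simp [funext_iff, Fin.forall_fin_one, eq_comm]

lemma chainLaw_succ_singleton {μ : Measure (Fin 2)}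
    {P : ∀ k : ℕ, Kernel (Fin (k + 1) → Fin 2) (Fin 2)}
    {Pr : ∀ n : ℕ, Measure (Fin (n + 1) → Fin 2)}
    [∀ n, IsProbabilityMeasure (Pr n)] [∀ k, IsMarkovKernel (P k)]
    (h : chainLaw μ P Pr) (n : ℕ) (x : Fin (n+2) → Fin 2) :
    Pr (n+1) {x} = Pr n {Fin.init x} * P n (Fin.init x) {x (Fin.last (n+1))} := by
  rw [h.2 n, Measure.map_apply (measurable_snocMap n) (measurableSet_singleton x),
    snoc_preimage', compProd_singleton']

lemma init_const' {n : ℕ} (c : Fin 2) :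
    Fin.init (fun _ : Fin (n+2) => c) = fun _ : Fin (n+1) => c := by
  funext i; simp [Fin.init]

lemma identity_const {μ : Measure (Fin 2)}
    {P : ∀ k : ℕ, Kernel (Fin (k + 1) → Fin 2) (Fin 2)}
    {Pr : ∀ n : ℕ, Measure (Fin (n + 1) → Fin 2)}
    [∀ n, IsProbabilityMeasure (Pr n)] [∀ k, IsMarkovKernel (P k)]
    (h : chainLaw μ P Pr) (hP : isIdentityKernel P) (n : ℕ) (c : Fin 2) :
    Pr n {fun _ => c} = μ {c} := by
  induction n with
  | zero => exact chainLaw_zero_singleton h _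
  | succ n ih =>
    rw [chainLaw_succ_singleton h n, init_const', ih, hP, Measure.dirac_apply]
    simp only [Set.indicator_apply, Set.mem_singleton_iff, if_pos rfl, if_true, Pi.one_apply,
      mul_one]

lemma identity_nonconst {μ : Measure (Fin 2)}
    {P : ∀ k : ℕ, Kernel (Fin (k + 1) → Fin 2) (Fin 2)}
    {Pr : ∀ n : ℕ, Measure (Fin (n + 1) → Fin 2)}
    [∀ n, IsProbabilityMeasure (Pr n)] [∀ k, IsMarkovKernel (P k)]
    (h : chainLaw μ P Pr) (hP : isIdentityKernel P) (n : ℕ)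
    (x : Fin (n+1) → Fin 2) (hx : x ≠ fun _ => x 0) :
    Pr n {x} = 0 := by
  induction n with
  | zero =>
    exact absurd (funext fun i => by rw [show i = 0 from Fin.ext (by omega)]) hx
  | succ n ih =>
    rw [chainLaw_succ_singleton h n]
    by_cases ha : Fin.init x = fun _ => (Fin.init x) 0
    · have hx0 : Fin.init x 0 = x 0 := by simp [Fin.init]
      have hlast : x (Fin.last (n+1)) ≠ x 0 := by
        intro hl
        apply hx
        funext i
        refine Fin.lastCases ?_ ?_ i
        · exact hl
        · intro j
          have : Fin.init x j = Fin.init x 0 := congrFun ha j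
          rw [Fin.init] at this
          simpa [hx0, Fin.init] using this
      have hlastn : Fin.init x (Fin.last n) = x 0 := by
        rw [congrFun ha (Fin.last n), hx0]
      rw [hP, hlastn, Measure.dirac_apply,
        Set.indicator_of_notMem (by simpa using Ne.symm hlast)]
      exact mul_zero _
    · rw [ih _ ha, zero_mul]

lemma flip_const {ε : ℝ} {μ : Measure (Fin 2)}
    {P : ∀ k : ℕ, Kernel (Fin (k + 1) → Fin 2) (Fin 2)}
    {Pr : ∀ n : ℕ, Measure (Fin (n + 1) → Fin 2)}
    [∀ n, IsProbabilityMeasure (Pr n)] [∀ k, IsMarkovKernel (P k)]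
    (h : chainLaw μ P Pr) (hP : isFlipKernel ε P) (n : ℕ) (c : Fin 2) :
    Pr n {fun _ => c} = μ {c} * (ENNReal.ofReal (1 - ε))^n := by
  induction n with
  | zero => rw [chainLaw_zero_singleton h _, pow_zero, mul_one]
  | succ n ih =>
    rw [chainLaw_succ_singleton h n, init_const', ih, hP]
    have hcc : c + 1 ≠ c := by
      have : ∀ d : Fin 2, d + 1 ≠ d := by decide
      exact this c
    simp only [Measure.coe_add, Pi.add_apply, Measure.coe_smul, Pi.smul_apply, smul_eq_mul,
      Measure.dirac_apply]
    simp only [Set.indicator_apply, Set.mem_singleton_iff, if_pos rfl, if_true, if_neg hcc,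
      Pi.one_apply, mul_one, mul_zero, add_zero]
    ring

/-- Two-state chain, case [b.]: if
`-p f_n(ε)/(1 - f_n(ε)) ≤ δ ≤ (1-p) f_n(ε)/(1 - f_n(ε))` with
`f_n(ε) = 1 − (1 − ε)ⁿ`, then `‖ℙⁿ − ℙ̃ⁿ‖ = 2 f_n(ε)`, independently of `δ`. -/
theorem stmt16 (p δ ε : ℝ) (hp0 : 0 ≤ p) (hp1 : p ≤ 1)
    (hδ : δ ∈ Set.Ioo (p - 1) p) (hε : ε ∈ Set.Ioo (0 : ℝ) 1)
    (μ μ' : Measure (Fin 2)) [IsProbabilityMeasure μ] [IsProbabilityMeasure μ']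
    (hμ : μ {1} = ENNReal.ofReal p) (hμ' : μ' {1} = ENNReal.ofReal (p - δ))
    (P P' : ∀ k : ℕ, Kernel (Fin (k + 1) → Fin 2) (Fin 2))
    [∀ k, IsMarkovKernel (P k)] [∀ k, IsMarkovKernel (P' k)]
    (hP : isIdentityKernel P) (hP' : isFlipKernel ε P')
    (Pr Pr' : ∀ n : ℕ, Measure (Fin (n + 1) → Fin 2))
    [∀ n, IsProbabilityMeasure (Pr n)] [∀ n, IsProbabilityMeasure (Pr' n)]
    (hPr : chainLaw μ P Pr) (hPr' : chainLaw μ' P' Pr')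
    (n : ℕ)
    (hlow : -(p * (1 - (1 - ε) ^ n)) / (1 - (1 - (1 - ε) ^ n)) ≤ δ)
    (hhigh : δ ≤ (1 - p) * (1 - (1 - ε) ^ n) / (1 - (1 - (1 - ε) ^ n))) :
    tvDist (Pr n) (Pr' n) = 2 * (1 - (1 - ε) ^ n) := by
  classical
  obtain ⟨hδ1, hδ2⟩ := hδ
  obtain ⟨hε0, hε1⟩ := hε
  set q : ℝ := (1 - ε) ^ n with hq_def
  have hq0 : 0 < q := pow_pos (by linarith) n
  have hq1 : q ≤ 1 := pow_le_one₀ (by linarith) (by linarith)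
  -- simplify hypotheses
  have hlow' : -(p * (1 - q)) ≤ δ * q := by
    have h : -(p * (1 - q)) / q ≤ δ := by
      have : (1 : ℝ) - (1 - q) = q := by ring
      rwa [this] at hlow
    calc -(p * (1 - q)) = (-(p * (1 - q)) / q) * q := by field_simp
    _ ≤ δ * q := by nlinarith [h]
  have hhigh' : δ * q ≤ (1 - p) * (1 - q) := by
    have h : δ ≤ (1 - p) * (1 - q) / q := by
      have : (1 : ℝ) - (1 - q) = q := by ring
      rwa [this] at hhigh
    calc δ * q ≤ ((1 - p) * (1 - q) / q) * q := by nlinarith [h]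
    _ = (1 - p) * (1 - q) := by field_simp
  have hpδ0 : 0 ≤ p - δ := by linarith
  have hpδ1 : p - δ ≤ 1 := by linarith
  -- μ {0} values
  have hsum2 : ∀ (m : Measure (Fin 2)) [IsProbabilityMeasure m], m {0} + m {1} = 1 := by
    intro m _
    have := meas_univ_eq_sum' m
    rw [measure_univ, Fin.sum_univ_two] at this
    exact this.symm
  have hμ0 : μ {0} = 1 - ENNReal.ofReal p := by
    refine ENNReal.eq_sub_of_add_eq ENNReal.ofReal_ne_top ?_
    rw [← hμ]; exact hsum2 μ
  have hμ'0 : μ' {0} = 1 - ENNReal.ofReal (p - δ) := by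
    refine ENNReal.eq_sub_of_add_eq ENNReal.ofReal_ne_top ?_
    rw [← hμ']; exact hsum2 μ'
  -- pow
  have hqe : (ENNReal.ofReal (1 - ε))^n = ENNReal.ofReal q := by
    rw [hq_def, ← ENNReal.ofReal_pow (by linarith)]
  -- point values
  set c0 : Fin (n+1) → Fin 2 := fun _ => 0 with hc0_def
  set c1 : Fin (n+1) → Fin 2 := fun _ => 1 with hc1_def
  have ht1 : (Pr n {c1}).toReal = p := by
    rw [hc1_def, identity_const hPr hP n 1, hμ, ENNReal.toReal_ofReal hp0]
  have ht0 : (Pr n {c0}).toReal = 1 - p := by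
    rw [hc0_def, identity_const hPr hP n 0, hμ0,
      ENNReal.toReal_sub_of_le (ENNReal.ofReal_le_one.2 hp1) ENNReal.one_ne_top,
      ENNReal.toReal_one, ENNReal.toReal_ofReal hp0]
  have hs1 : (Pr' n {c1}).toReal = (p - δ) * q := by
    rw [hc1_def, flip_const hPr' hP' n 1, hμ', hqe, ENNReal.toReal_mul,
      ENNReal.toReal_ofReal hpδ0, ENNReal.toReal_ofReal hq0.le]
  have hs0 : (Pr' n {c0}).toReal = (1 - (p - δ)) * q := by
    rw [hc0_def, flip_const hPr' hP' n 0, hμ'0, hqe, ENNReal.toReal_mul,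
      ENNReal.toReal_sub_of_le (ENNReal.ofReal_le_one.2 hpδ1) ENNReal.one_ne_top,
      ENNReal.toReal_one, ENNReal.toReal_ofReal hpδ0, ENNReal.toReal_ofReal hq0.le]
  -- sum splitting
  have hne : c0 ≠ c1 := by
    intro hcontra
    have := congrFun hcontra 0
    simp [hc0_def, hc1_def] at this
  have hsplit : ∀ f : (Fin (n+1) → Fin 2) → ℝ,
      ∑ x, f x = f c1 + f c0 + ∑ x ∈ (Finset.univ.erase c1).erase c0, f x := by
    intro f
    rw [← Finset.add_sum_erase _ f (Finset.mem_univ c1),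
      ← Finset.add_sum_erase _ f (Finset.mem_erase.2 ⟨hne, Finset.mem_univ c0⟩)]
    ring
  have hEzero : ∀ x ∈ (Finset.univ.erase c1).erase c0, Pr n {x} = 0 := by
    intro x hx
    obtain ⟨hx0, hx1, -⟩ := by
      have h1 := Finset.mem_erase.1 hx
      have h2 := Finset.mem_erase.1 h1.2
      exact (⟨h1.1, h2.1, trivial⟩ : x ≠ c0 ∧ x ≠ c1 ∧ True)
    refine identity_nonconst hPr hP n x ?_
    intro hconst
    have hd : x 0 = 0 ∨ x 0 = 1 := by
      have : ∀ d : Fin 2, d = 0 ∨ d = 1 := by decide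
      exact this (x 0)
    rcases hd with hd | hd
    · exact hx0 (by rw [hconst, hd])
    · exact hx1 (by rw [hconst, hd])
  -- Pr' total mass as real sum
  have hPr'sum : ∑ x, (Pr' n {x}).toReal = 1 := by
    rw [← ENNReal.toReal_sum (fun a _ => measure_ne_top _ _), ← meas_univ_eq_sum',
      measure_univ, ENNReal.toReal_one]
  -- main computation
  rw [tvDist_eq_sum' (Pr n) (Pr' n)]
  rw [hsplit (fun x => |(Pr n {x}).toReal - (Pr' n {x}).toReal|)]
  have hrest : ∑ x ∈ (Finset.univ.erase c1).erase c0,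
      |(Pr n {x}).toReal - (Pr' n {x}).toReal|
      = ∑ x ∈ (Finset.univ.erase c1).erase c0, (Pr' n {x}).toReal := by
    refine Finset.sum_congr rfl fun x hx => ?_
    rw [hEzero x hx, ENNReal.toReal_zero, zero_sub, abs_neg,
      abs_of_nonneg ENNReal.toReal_nonneg]
  rw [hrest]
  have hrestval : ∑ x ∈ (Finset.univ.erase c1).erase c0, (Pr' n {x}).toReal
      = 1 - (p - δ) * q - (1 - (p - δ)) * q := by
    have := hsplit (fun x => (Pr' n {x}).toReal)
    rw [hPr'sum, hs1, hs0] at this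
    linarith
  rw [hrestval, ht1, ht0, hs1, hs0]
  rw [abs_of_nonneg (by nlinarith), abs_of_nonneg (by nlinarith)]
  rw [hq_def] at *
  ring
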